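/- Strong law of large numbers in the L²(σ) support norm: suppose (Z_i) is weakly stationary, and that there are nonnegative numbers (ρ_k)_{k≥1} with ∑_{k=1}^∞ ρ_k < ∞ such that for all k ≥ 1 and all u ∈ S^{d-1}, |Cov(Z_0(·,u), Z_k(·,u))| ≤ ρ_k·√(Var(Z_0(·,u))·Var(Z_k(·,u))). Then ‖S_n(ω,·)‖_{2,σ} → 0 as n → ∞ for ℙ-almost every ω. -/

import Mathlib

open MeasureTheory Filter
open scoped RealInnerProductSpace
open scoped ENNReal

noncomputable section

/-- The unit sphere `S^{d-1}` in Euclidean space `ℝ^d`. -/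
abbrev Sph (d : ℕ) := Metric.sphere (0 : EuclideanSpace ℝ (Fin d)) 1

/-- Covariance of two real random variables w.r.t. a measure `P`. -/
def cov' {Ω : Type*} [MeasurableSpace Ω] (P : Measure Ω) (X Y : Ω → ℝ) : ℝ :=
  ∫ ω, (X ω - ∫ x, X x ∂P) * (Y ω - ∫ x, Y x ∂P) ∂P

/-- Variance of a real random variable w.r.t. a measure `P`. -/
def var' {Ω : Type*} [MeasurableSpace Ω] (P : Measure Ω) (X : Ω → ℝ) : ℝ := cov' P X X

/-- The `L²(σ)` norm of a function on the sphere. -/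
def l2norm {d : ℕ} (σ : Measure (Sph d)) (f : Sph d → ℝ) : ℝ :=
  Real.sqrt (∫ u, f u ^ 2 ∂σ)

/-- The normalized partial sum `S_n(ω,u) = (1/n) ∑_{i=1}^n Z_i(ω,u)`. -/
def partialAvg {Ω : Type*} {d : ℕ} (Z : ℕ → Ω × Sph d → ℝ) (n : ℕ)
    (ω : Ω) (u : Sph d) : ℝ :=
  (1 / (n : ℝ)) * ∑ i ∈ Finset.Icc 1 n, Z i (ω, u)

/-- A centered square-integrable jointly measurable field on `Ω × S^{d-1}`. -/
def IsCenteredField {Ω : Type*} [MeasurableSpace Ω] {d : ℕ} (P : Measure Ω)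
    (σ : Measure (Sph d)) (Z : Ω × Sph d → ℝ) : Prop :=
  Measurable Z ∧ Integrable (fun p => (Z p) ^ 2) (P.prod σ)
    ∧ ∀ u, ∫ ω, Z (ω, u) ∂P = 0

/-- Weak stationarity: lagged direction-wise covariances depend only on the lag. -/
def WeaklyStationary {Ω : Type*} [MeasurableSpace Ω] {d : ℕ} (P : Measure Ω)
    (Z : ℕ → Ω × Sph d → ℝ) : Prop :=
  ∀ i k : ℕ, ∀ u : Sph d,
    cov' P (fun ω => Z i (ω, u)) (fun ω => Z (i + k) (ω, u))
      = cov' P (fun ω => Z 0 (ω, u)) (fun ω => Z k (ω, u))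

/-! ### Auxiliary lemmas -/

section Aux
variable {Ω : Type*} [MeasurableSpace Ω] {P : Measure Ω}

lemma cov'_eq_integral_mul {X Y : Ω → ℝ} (hX : ∫ ω, X ω ∂P = 0) (hY : ∫ ω, Y ω ∂P = 0) :
    cov' P X Y = ∫ ω, X ω * Y ω ∂P := by
  simp [cov', hX, hY]

lemma cov'_symm (X Y : Ω → ℝ) : cov' P X Y = cov' P Y X := by
  unfold cov'; congr 1; ext ω; ring

lemma var'_nonneg (X : Ω → ℝ) : 0 ≤ var' P X :=
  integral_nonneg fun ω => mul_self_nonneg _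

lemma integrable_mul_of_sq {f g : Ω → ℝ} (hfm : AEStronglyMeasurable f P)
    (hgm : AEStronglyMeasurable g P)
    (hf : Integrable (fun x => f x ^ 2) P) (hg : Integrable (fun x => g x ^ 2) P) :
    Integrable (fun x => f x * g x) P := by
  have h : Integrable (fun x => (f x ^ 2 + g x ^ 2) / 2) P := (hf.add hg).div_const 2
  refine h.mono' (hfm.mul hgm) (Filter.Eventually.of_forall fun x => ?_)
  rw [Real.norm_eq_abs, abs_mul]
  nlinarith [sq_nonneg (|f x| - |g x|), sq_abs (f x), sq_abs (g x)]

end Aux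

noncomputable def rho' (ρ : ℕ → ℝ) (k : ℕ) : ℝ := if k = 0 then 1 else ρ k

lemma rho'_nonneg {ρ : ℕ → ℝ} (hρ0 : ∀ k, 1 ≤ k → 0 ≤ ρ k) (k : ℕ) : 0 ≤ rho' ρ k := by
  unfold rho'; split
  · norm_num
  · exact hρ0 k (by omega)

lemma shift_sum_le {ρ : ℕ → ℝ} (hρ0 : ∀ k, 1 ≤ k → 0 ≤ ρ k)
    (hρsum : Summable fun k => ρ (k+1)) (s : Finset ℕ) (e : ℕ → ℕ)
    (he : ∀ x ∈ s, ∀ y ∈ s, e x = e y → x = y) :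
    ∑ j ∈ s, ρ (e j + 1) ≤ ∑' k, ρ (k + 1) := by
  classical
  rw [← Finset.sum_image (f := fun k => ρ (k+1)) he]
  exact hρsum.sum_le_tsum _ (fun k _ => hρ0 _ (by omega))

lemma row_bound {ρ : ℕ → ℝ} (hρ0 : ∀ k, 1 ≤ k → 0 ≤ ρ k)
    (hρsum : Summable fun k => ρ (k+1)) (A : Finset ℕ) (i : ℕ) :
    ∑ j ∈ A, rho' ρ ((i-j)+(j-i)) ≤ 1 + 2 * ∑' k, ρ (k+1) := by
  classical
  set R := ∑' k, ρ (k+1) with hR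
  have hR0 : 0 ≤ R := tsum_nonneg fun k => hρ0 _ (by omega)
  rw [← Finset.sum_filter_add_sum_filter_not A (· < i)]
  have h1 : ∑ j ∈ A.filter (· < i), rho' ρ ((i-j)+(j-i)) ≤ R := by
    have : ∀ j ∈ A.filter (· < i), rho' ρ ((i-j)+(j-i)) = ρ ((i - j - 1) + 1) := by
      intro j hj
      have hj' : j < i := by simpa using (Finset.mem_filter.1 hj).2
      unfold rho'
      rw [if_neg (by omega)]
      congr 1; omega
    rw [Finset.sum_congr rfl this]
    exact shift_sum_le hρ0 hρsum _ _ (fun x hx y hy h => by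
      have hx' : x < i := by simpa using (Finset.mem_filter.1 hx).2
      have hy' : y < i := by simpa using (Finset.mem_filter.1 hy).2
      omega)
  have h2 : ∑ j ∈ A.filter (fun j => ¬ j < i), rho' ρ ((i-j)+(j-i)) ≤ 1 + R := by
    set B := A.filter (fun j => ¬ j < i) with hB
    rw [← Finset.sum_filter_add_sum_filter_not B (· = i)]
    have h21 : ∑ j ∈ B.filter (· = i), rho' ρ ((i-j)+(j-i)) ≤ 1 := by
      have hsub : B.filter (· = i) ⊆ {i} := by
        intro j hj; simp only [Finset.mem_filter] at hj
        simp [hj.2]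
      calc ∑ j ∈ B.filter (· = i), rho' ρ ((i-j)+(j-i))
          ≤ ∑ j ∈ ({i} : Finset ℕ), rho' ρ ((i-j)+(j-i)) :=
            Finset.sum_le_sum_of_subset_of_nonneg hsub (fun j _ _ => rho'_nonneg hρ0 _)
        _ = 1 := by simp [rho']
    have h22 : ∑ j ∈ B.filter (· ≠ i), rho' ρ ((i-j)+(j-i)) ≤ R := by
      have : ∀ j ∈ B.filter (· ≠ i), rho' ρ ((i-j)+(j-i)) = ρ ((j - i - 1) + 1) := by
        intro j hj
        simp only [hB, Finset.mem_filter] at hj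
        have : i < j := by omega
        unfold rho'
        rw [if_neg (by omega)]
        congr 1; omega
      rw [Finset.sum_congr rfl this]
      refine shift_sum_le hρ0 hρsum _ _ (fun x hx y hy h => ?_)
      simp only [hB, Finset.mem_filter] at hx hy
      omega
    linarith
  linarith

/-- partial sum over `Icc (a+1) b` -/
def Tblk {Ω : Type*} {d : ℕ} (Z : ℕ → Ω × Sph d → ℝ) (a b : ℕ) (p : Ω × Sph d) : ℝ :=
  ∑ i ∈ Finset.Icc (a+1) b, Z i p

def gblk {Ω : Type*} [MeasurableSpace Ω] {d : ℕ} (σ : Measure (Sph d))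
    (Z : ℕ → Ω × Sph d → ℝ) (a b : ℕ) (ω : Ω) : ℝ≥0∞ :=
  ∫⁻ u, ENNReal.ofReal ((Tblk Z a b (ω, u))^2) ∂σ

section Meas
variable {Ω : Type*} [MeasurableSpace Ω] {d : ℕ} {σ : Measure (Sph d)}
  {Z : ℕ → Ω × Sph d → ℝ}

lemma Tblk_meas (hZ : ∀ i, Measurable (Z i)) (a b : ℕ) : Measurable (Tblk Z a b) :=
  Finset.measurable_sum _ (fun i _ => hZ i)

lemma Fblk_meas (hZ : ∀ i, Measurable (Z i)) (a b : ℕ) :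
    Measurable (fun p : Ω × Sph d => ENNReal.ofReal ((Tblk Z a b p)^2)) :=
  ENNReal.measurable_ofReal.comp ((Tblk_meas hZ a b).pow_const 2)

lemma gblk_meas [SFinite σ] (hZ : ∀ i, Measurable (Z i)) (a b : ℕ) :
    Measurable (gblk σ Z a b) :=
  Measurable.lintegral_prod_right (f := fun ω u => ENNReal.ofReal ((Tblk Z a b (ω, u))^2))
    (Fblk_meas hZ a b)

end Meas

/-- SLLN in the `L²(σ)` support norm: under weak stationarity and
summable mixing bounds, `‖S_n(ω,·)‖_{2,σ} → 0` for `ℙ`-almost every `ω`. -/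
theorem slln_support_norm {Ω : Type*} [MeasurableSpace Ω] {d : ℕ} (hd : 0 < d)
    (P : Measure Ω) [IsProbabilityMeasure P]
    (σ : Measure (Sph d)) [IsProbabilityMeasure σ]
    (Z : ℕ → Ω × Sph d → ℝ) (hZ : ∀ i, IsCenteredField P σ (Z i))
    (hstat : WeaklyStationary P Z)
    (ρ : ℕ → ℝ) (hρ0 : ∀ k, 1 ≤ k → 0 ≤ ρ k)
    (hρsum : Summable (fun k : ℕ => ρ (k + 1)))
    (hmix : ∀ k, 1 ≤ k → ∀ u : Sph d,
      |cov' P (fun ω => Z 0 (ω, u)) (fun ω => Z k (ω, u))|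
        ≤ ρ k * Real.sqrt (var' P (fun ω => Z 0 (ω, u)) * var' P (fun ω => Z k (ω, u)))) :
    ∀ᵐ ω ∂P, Tendsto (fun n : ℕ => l2norm σ (fun u => partialAvg Z n ω u))
      atTop (nhds 0) := by
  classical
  have hZm : ∀ i, Measurable (Z i) := fun i => (hZ i).1
  set R := ∑' k, ρ (k+1) with hRdef
  have hR0 : 0 ≤ R := tsum_nonneg fun k => hρ0 _ (by omega)
  set v : Sph d → ℝ := fun u => var' P (fun ω => Z 0 (ω, u)) with hvdef
  have hv0 : ∀ u, 0 ≤ v u := fun u => var'_nonneg _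
  have hvar : ∀ k u, var' P (fun ω => Z k (ω, u)) = v u := by
    intro k u
    have := hstat k 0 u
    simpa [var', hvdef] using this
  -- covariance bound
  have hcov : ∀ i j u, cov' P (fun ω => Z i (ω, u)) (fun ω => Z j (ω, u))
      ≤ rho' ρ ((i-j)+(j-i)) * v u := by
    have aux : ∀ i j u, i ≤ j → cov' P (fun ω => Z i (ω, u)) (fun ω => Z j (ω, u))
        ≤ rho' ρ (j - i) * v u := by
      intro i j u hij
      rcases eq_or_lt_of_le hij with rfl | hlt
      · have : cov' P (fun ω => Z i (ω, u)) (fun ω => Z i (ω, u)) = v u := hvar i u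
        simp [this, rho']
      · set k := j - i with hk
        have hk1 : 1 ≤ k := by omega
        have hij' : j = i + k := by omega
        have h1 : cov' P (fun ω => Z i (ω, u)) (fun ω => Z j (ω, u))
            = cov' P (fun ω => Z 0 (ω, u)) (fun ω => Z k (ω, u)) := by
          rw [hij']; exact hstat i k u
        have h2 := hmix k hk1 u
        rw [hvar 0 u, hvar k u, Real.sqrt_mul_self (hv0 u)] at h2
        have h3 : cov' P (fun ω => Z 0 (ω, u)) (fun ω => Z k (ω, u)) ≤ ρ k * v u :=
          le_trans (le_abs_self _) h2
        rw [h1]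
        have : rho' ρ k = ρ k := by unfold rho'; rw [if_neg (by omega)]
        rw [this]
        exact h3
    intro i j u
    rcases le_total i j with h | h
    · have h0 : i - j = 0 := by omega
      rw [h0, zero_add]
      exact aux i j u h
    · have h0 : j - i = 0 := by omega
      rw [h0, add_zero, cov'_symm]
      exact aux j i u h
  -- a.e.-u integrability
  have hgood : ∀ᵐ u ∂σ, ∀ i, Integrable (fun ω => (Z i (ω, u))^2) P := by
    rw [ae_all_iff]
    intro i
    exact ((hZ i).2.1.swap).prod_right_ae
  -- key per-direction second moment bound
  have keybound : ∀ a b : ℕ, ∀ᵐ u ∂σ,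
      ∫⁻ ω, ENNReal.ofReal ((Tblk Z a b (ω, u))^2) ∂P
        ≤ ENNReal.ofReal (((b - a : ℕ) : ℝ) * ((1 + 2*R) * v u)) := by
    intro a b
    filter_upwards [hgood] with u hu
    set A := Finset.Icc (a+1) b with hA
    have hmeasu : ∀ i, Measurable (fun ω => Z i (ω, u)) :=
      fun i => (hZm i).comp measurable_prodMk_right
    have hmem : ∀ i, MemLp (fun ω => Z i (ω, u)) 2 P :=
      fun i => (memLp_two_iff_integrable_sq (hmeasu i).aestronglyMeasurable).2 (hu i)
    have hmul : ∀ i j, Integrable (fun ω => Z i (ω, u) * Z j (ω, u)) P :=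
      fun i j => integrable_mul_of_sq (hmeasu i).aestronglyMeasurable
        (hmeasu j).aestronglyMeasurable (hu i) (hu j)
    have hTmem : MemLp (fun ω => Tblk Z a b (ω, u)) 2 P := by
      have h := memLp_finsetSum' (μ := P) A (f := fun i ω => Z i (ω, u)) (fun i _ => hmem i)
      have he : (∑ i ∈ A, fun ω => Z i (ω, u)) = fun ω => Tblk Z a b (ω, u) := by
        funext ω; simp [Tblk, hA]
      rwa [he] at h
    have hTsq : Integrable (fun ω => (Tblk Z a b (ω, u))^2) P := hTmem.integrable_sq
    have hexp : ∫ ω, (Tblk Z a b (ω, u))^2 ∂P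
        = ∑ i ∈ A, ∑ j ∈ A, ∫ ω, Z i (ω, u) * Z j (ω, u) ∂P := by
      have h1 : (fun ω => (Tblk Z a b (ω, u))^2)
          = fun ω => ∑ i ∈ A, ∑ j ∈ A, Z i (ω, u) * Z j (ω, u) := by
        funext ω; rw [Tblk, sq, Finset.sum_mul_sum]
      rw [h1, integral_finset_sum A (fun i _ => integrable_finset_sum A (fun j _ => hmul i j))]
      exact Finset.sum_congr rfl fun i _ => integral_finset_sum A (fun j _ => hmul i j)
    have hbound : ∫ ω, (Tblk Z a b (ω, u))^2 ∂P ≤ ((b - a : ℕ) : ℝ) * ((1 + 2*R) * v u) := by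
      rw [hexp]
      have hle : ∀ i ∈ A, ∑ j ∈ A, ∫ ω, Z i (ω, u) * Z j (ω, u) ∂P ≤ (1 + 2*R) * v u := by
        intro i _
        have hterm : ∀ j ∈ A, ∫ ω, Z i (ω, u) * Z j (ω, u) ∂P
            ≤ rho' ρ ((i-j)+(j-i)) * v u := by
          intro j _
          rw [← cov'_eq_integral_mul ((hZ i).2.2 u) ((hZ j).2.2 u)]
          exact hcov i j u
        calc ∑ j ∈ A, ∫ ω, Z i (ω, u) * Z j (ω, u) ∂P
            ≤ ∑ j ∈ A, rho' ρ ((i-j)+(j-i)) * v u := Finset.sum_le_sum hterm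
          _ = (∑ j ∈ A, rho' ρ ((i-j)+(j-i))) * v u := by rw [Finset.sum_mul]
          _ ≤ (1 + 2*R) * v u :=
              mul_le_mul_of_nonneg_right (row_bound hρ0 hρsum A i) (hv0 u)
      calc ∑ i ∈ A, ∑ j ∈ A, ∫ ω, Z i (ω, u) * Z j (ω, u) ∂P
          ≤ ∑ i ∈ A, (1 + 2*R) * v u := Finset.sum_le_sum hle
        _ = (A.card : ℝ) * ((1 + 2*R) * v u) := by rw [Finset.sum_const, nsmul_eq_mul]
        _ = ((b - a : ℕ) : ℝ) * ((1 + 2*R) * v u) := by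
            rw [hA, Nat.card_Icc]; congr 2; omega
    calc ∫⁻ ω, ENNReal.ofReal ((Tblk Z a b (ω, u))^2) ∂P
        = ENNReal.ofReal (∫ ω, (Tblk Z a b (ω, u))^2 ∂P) :=
          (ofReal_integral_eq_lintegral_ofReal hTsq
            (Filter.Eventually.of_forall fun ω => sq_nonneg _)).symm
      _ ≤ _ := ENNReal.ofReal_le_ofReal hbound
  -- the constant C = (1+2R) * ∫ v dσ, finite
  set W := ∫⁻ u, ENNReal.ofReal (v u) ∂σ with hWdef
  have hveq : ∀ u, v u = ∫ ω, Z 0 (ω, u) * Z 0 (ω, u) ∂P := fun u =>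
    cov'_eq_integral_mul ((hZ 0).2.2 u) ((hZ 0).2.2 u)
  have hWfin : W ≠ ⊤ := by
    have h1 : ∀ᵐ u ∂σ, ENNReal.ofReal (v u)
        = ∫⁻ ω, ENNReal.ofReal ((Z 0 (ω, u))^2) ∂P := by
      filter_upwards [hgood] with u hu
      rw [hveq u]
      have h2 : (fun ω => Z 0 (ω, u) * Z 0 (ω, u)) = fun ω => (Z 0 (ω, u))^2 := by
        funext ω; ring
      rw [h2]
      exact ofReal_integral_eq_lintegral_ofReal (hu 0)
        (Filter.Eventually.of_forall fun ω => sq_nonneg _)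
    rw [hWdef, lintegral_congr_ae h1]
    have hFm : Measurable (fun p : Ω × Sph d => ENNReal.ofReal ((Z 0 p)^2)) :=
      ENNReal.measurable_ofReal.comp ((hZm 0).pow_const 2)
    rw [← lintegral_lintegral_swap hFm.aemeasurable, ← lintegral_prod _ hFm.aemeasurable]
    have hint := (hZ 0).2.1.hasFiniteIntegral
    refine ne_of_lt (lt_of_le_of_lt (lintegral_mono fun p => ?_) hint)
    exact Real.ofReal_le_enorm _
  set C : ℝ≥0∞ := ENNReal.ofReal (1 + 2*R) * W with hCdef
  have hCfin : C ≠ ⊤ := ENNReal.mul_ne_top ENNReal.ofReal_ne_top hWfin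
  have gbound : ∀ a b : ℕ, ∫⁻ ω, gblk σ Z a b ω ∂P ≤ ((b - a : ℕ) : ℝ≥0∞) * C := by
    intro a b
    have hswap : ∫⁻ ω, gblk σ Z a b ω ∂P
        = ∫⁻ u, ∫⁻ ω, ENNReal.ofReal ((Tblk Z a b (ω, u))^2) ∂P ∂σ :=
      lintegral_lintegral_swap (Fblk_meas hZm a b).aemeasurable
    rw [hswap]
    calc ∫⁻ u, ∫⁻ ω, ENNReal.ofReal ((Tblk Z a b (ω, u))^2) ∂P ∂σ
        ≤ ∫⁻ u, ENNReal.ofReal (((b - a : ℕ) : ℝ) * ((1 + 2*R) * v u)) ∂σ :=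
          lintegral_mono_ae (keybound a b)
      _ = ∫⁻ u, (((b - a : ℕ) : ℝ≥0∞) * ENNReal.ofReal (1 + 2*R))
            * ENNReal.ofReal (v u) ∂σ := by
          congr 1; funext u
          rw [ENNReal.ofReal_mul (by positivity),
            ENNReal.ofReal_mul (by linarith), ENNReal.ofReal_natCast, mul_assoc]
      _ = ((b - a : ℕ) : ℝ≥0∞) * ENNReal.ofReal (1 + 2*R) * W :=
          lintegral_const_mul' _ _
            (ENNReal.mul_ne_top (ENNReal.natCast_ne_top _) ENNReal.ofReal_ne_top)
      _ = ((b - a : ℕ) : ℝ≥0∞) * C := by rw [hCdef, mul_assoc]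
  -- block quantities
  set Dn : ℕ → Ω → ℝ≥0∞ := fun n ω =>
    gblk σ Z 0 (n^2) ω + ∑ m ∈ Finset.Ico (n^2) ((n+1)^2), gblk σ Z (n^2) m ω with hDndef
  have hDnm : ∀ n, Measurable (Dn n) := fun n =>
    (gblk_meas hZm 0 (n^2)).add (Finset.measurable_sum _ fun m _ => gblk_meas hZm (n^2) m)
  have hnat : ∀ n : ℕ, (n^2 - 0) + ∑ m ∈ Finset.Ico (n^2) ((n+1)^2), (m - n^2) ≤ 7*n^2 := by
    intro n
    have hcard : (Finset.Ico (n^2) ((n+1)^2)).card = 2*n+1 := by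
      rw [Nat.card_Ico]; ring_nf; omega
    have hsum : ∑ m ∈ Finset.Ico (n^2) ((n+1)^2), (m - n^2)
        ≤ (Finset.Ico (n^2) ((n+1)^2)).card • (2*n) := by
      refine Finset.sum_le_card_nsmul _ _ _ (fun m hm => ?_)
      rw [Finset.mem_Ico] at hm
      have : m < n^2 + 2*n + 1 := by nlinarith [hm.2]
      omega
    rw [hcard] at hsum
    simp only [smul_eq_mul] at hsum
    rcases Nat.eq_zero_or_pos n with rfl | hn
    · simpa using hsum
    · have h : n ≤ n^2 := Nat.le_self_pow (by norm_num) n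
      have e : (2*n+1)*(2*n) = 4*n^2+2*n := by ring
      omega
  have hDnE : ∀ n : ℕ, ∫⁻ ω, Dn n ω ∂P ≤ ((7*n^2 : ℕ) : ℝ≥0∞) * C := by
    intro n
    have h1 : ∫⁻ ω, Dn n ω ∂P
        = ∫⁻ ω, gblk σ Z 0 (n^2) ω ∂P
          + ∑ m ∈ Finset.Ico (n^2) ((n+1)^2), ∫⁻ ω, gblk σ Z (n^2) m ω ∂P := by
      simp only [hDndef]
      rw [lintegral_add_left (gblk_meas hZm 0 (n^2)),
        lintegral_finset_sum _ (fun m _ => gblk_meas hZm (n^2) m)]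
    rw [h1]
    have h3 : ∑ m ∈ Finset.Ico (n^2) ((n+1)^2), ∫⁻ ω, gblk σ Z (n^2) m ω ∂P
        ≤ (((∑ m ∈ Finset.Ico (n^2) ((n+1)^2), (m - n^2)) : ℕ) : ℝ≥0∞) * C := by
      rw [Nat.cast_sum, Finset.sum_mul]
      exact Finset.sum_le_sum fun m _ => gbound (n^2) m
    calc ∫⁻ ω, gblk σ Z 0 (n^2) ω ∂P
          + ∑ m ∈ Finset.Ico (n^2) ((n+1)^2), ∫⁻ ω, gblk σ Z (n^2) m ω ∂P
        ≤ ((n^2 - 0 : ℕ) : ℝ≥0∞) * C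
          + (((∑ m ∈ Finset.Ico (n^2) ((n+1)^2), (m - n^2)) : ℕ) : ℝ≥0∞) * C :=
          add_le_add (gbound 0 (n^2)) h3
      _ = ((((n^2 - 0) + ∑ m ∈ Finset.Ico (n^2) ((n+1)^2), (m - n^2)) : ℕ) : ℝ≥0∞) * C := by
          rw [Nat.cast_add, add_mul]
      _ ≤ ((7*n^2 : ℕ) : ℝ≥0∞) * C :=
          mul_le_mul_left (Nat.cast_le.2 (hnat n)) C
  set En : ℕ → Ω → ℝ≥0∞ := fun n ω => ENNReal.ofReal ((n:ℝ)⁻¹^4) * Dn n ω with hEndef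
  have hEnm : ∀ n, Measurable (En n) := fun n => (hDnm n).const_mul _
  have hsumfin : ∫⁻ ω, ∑' n, En n ω ∂P ≠ ⊤ := by
    rw [lintegral_tsum (fun n => (hEnm n).aemeasurable)]
    have hterm : ∀ n : ℕ, ∫⁻ ω, En n ω ∂P ≤ ENNReal.ofReal (7*((n:ℝ)⁻¹^2)) * C := by
      intro n
      simp only [hEndef]
      rw [lintegral_const_mul' _ _ ENNReal.ofReal_ne_top]
      rcases Nat.eq_zero_or_pos n with rfl | hn
      · simp
      · calc ENNReal.ofReal ((n:ℝ)⁻¹^4) * ∫⁻ ω, Dn n ω ∂P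
            ≤ ENNReal.ofReal ((n:ℝ)⁻¹^4) * (((7*n^2 : ℕ) : ℝ≥0∞) * C) :=
              mul_le_mul_right (hDnE n) _
          _ = (ENNReal.ofReal ((n:ℝ)⁻¹^4) * ENNReal.ofReal ((7*n^2 : ℕ) : ℝ)) * C := by
              rw [ENNReal.ofReal_natCast, mul_assoc]
          _ = ENNReal.ofReal (7*((n:ℝ)⁻¹^2)) * C := by
              rw [← ENNReal.ofReal_mul (by positivity)]
              congr 1
              have hn' : (n:ℝ) ≠ 0 := Nat.cast_ne_zero.2 hn.ne'
              push_cast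
              field_simp
    have hsummable : Summable (fun n : ℕ => 7*((n:ℝ)⁻¹^2)) := by
      have h := (Real.summable_one_div_nat_pow (p := 2)).2 one_lt_two
      have h2 := h.mul_left 7
      refine h2.congr fun n => ?_
      rw [one_div, inv_pow]
    have hle : ∑' n : ℕ, ∫⁻ ω, En n ω ∂P
        ≤ ENNReal.ofReal (∑' n : ℕ, 7*((n:ℝ)⁻¹^2)) * C := by
      calc ∑' n : ℕ, ∫⁻ ω, En n ω ∂P
          ≤ ∑' n : ℕ, ENNReal.ofReal (7*((n:ℝ)⁻¹^2)) * C := ENNReal.tsum_le_tsum hterm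
        _ = (∑' n : ℕ, ENNReal.ofReal (7*((n:ℝ)⁻¹^2))) * C := ENNReal.tsum_mul_right
        _ = ENNReal.ofReal (∑' n : ℕ, 7*((n:ℝ)⁻¹^2)) * C := by
            rw [ENNReal.ofReal_tsum_of_nonneg (fun n => by positivity) hsummable]
    exact ne_top_of_le_ne_top (ENNReal.mul_ne_top ENNReal.ofReal_ne_top hCfin) hle
  have hae : ∀ᵐ ω ∂P, Tendsto (fun n => En n ω) atTop (nhds 0) := by
    have hmt : Measurable (fun ω => ∑' n, En n ω) := Measurable.ennreal_tsum hEnm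
    filter_upwards [ae_lt_top hmt hsumfin] with ω hω
    exact ENNReal.tendsto_atTop_zero_of_tsum_ne_top hω.ne
  -- conclusion for a fixed good ω
  filter_upwards [hae] with ω hω
  set L : ℕ → ℝ≥0∞ := fun m => ∫⁻ u, ENNReal.ofReal ((partialAvg Z m ω u)^2) ∂σ with hLdef
  have hLle : ∀ m : ℕ, 1 ≤ m → L m ≤ 2 * En (Nat.sqrt m) ω := by
    intro m hm
    set n := Nat.sqrt m with hn
    have hn1 : 1 ≤ n := Nat.le_sqrt.2 (by omega)
    have hmn : n^2 ≤ m := Nat.sqrt_le' m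
    have hm2 : m < (n+1)^2 := by
      simpa [Nat.succ_eq_add_one] using Nat.lt_succ_sqrt' m
    have hpt : ∀ u : Sph d, ENNReal.ofReal ((partialAvg Z m ω u)^2)
        ≤ (2 * ENNReal.ofReal ((n:ℝ)⁻¹^4)) * ENNReal.ofReal ((Tblk Z 0 (n^2) (ω, u))^2)
          + (2 * ENNReal.ofReal ((n:ℝ)⁻¹^4)) * ENNReal.ofReal ((Tblk Z (n^2) m (ω, u))^2) := by
      intro u
      set x := Tblk Z 0 (n^2) (ω, u) with hx
      set y := Tblk Z (n^2) m (ω, u) with hy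
      have hIoc : ∀ (a b : ℕ), Finset.Icc (a+1) b = Finset.Ioc a b := fun a b => by
        ext j; simp only [Finset.mem_Icc, Finset.mem_Ioc]; omega
      have hsplit : (∑ i ∈ Finset.Icc 1 m, Z i (ω, u)) = x + y := by
        have h0 : Finset.Icc 1 m = Finset.Ioc 0 m := hIoc 0 m
        simp only [hx, hy, Tblk]
        rw [h0, hIoc 0 (n^2), hIoc (n^2) m]
        exact (Finset.sum_Ioc_consecutive _ (Nat.zero_le _) hmn).symm
      have e1 : (partialAvg Z m ω u)^2 = ((m:ℝ)⁻¹)^2 * (x+y)^2 := by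
        rw [partialAvg, hsplit, mul_pow, one_div]
      have e3 : ((m:ℝ)⁻¹)^2 ≤ ((n:ℝ)⁻¹)^4 := by
        have h1 : ((n:ℝ)^2) ≤ (m:ℝ) := by exact_mod_cast hmn
        have hn0 : (0:ℝ) < (n:ℝ)^2 := by
          have : (1:ℝ) ≤ (n:ℝ) := by exact_mod_cast hn1
          positivity
        calc ((m:ℝ)⁻¹)^2 ≤ (((n:ℝ)^2)⁻¹)^2 := by gcongr
          _ = ((n:ℝ)⁻¹)^4 := by rw [← inv_pow, ← pow_mul]
      have e4 : (partialAvg Z m ω u)^2 ≤ (n:ℝ)⁻¹^4 * (2*x^2 + 2*y^2) := by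
        rw [e1]
        have e2 : (x+y)^2 ≤ 2*x^2 + 2*y^2 := by nlinarith [sq_nonneg (x-y)]
        exact mul_le_mul e3 e2 (sq_nonneg _) (by positivity)
      calc ENNReal.ofReal ((partialAvg Z m ω u)^2)
          ≤ ENNReal.ofReal ((n:ℝ)⁻¹^4 * (2*x^2 + 2*y^2)) := ENNReal.ofReal_le_ofReal e4
        _ = ENNReal.ofReal ((n:ℝ)⁻¹^4) * (ENNReal.ofReal (2*x^2) + ENNReal.ofReal (2*y^2)) := by
            rw [ENNReal.ofReal_mul (by positivity), ENNReal.ofReal_add (by positivity) (by positivity)]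
        _ = _ := by
            rw [ENNReal.ofReal_mul (by norm_num), ENNReal.ofReal_mul (by norm_num : (0:ℝ) ≤ 2)]
            rw [show ENNReal.ofReal (2:ℝ) = 2 by norm_num]
            ring
    have hmeas1 : Measurable (fun u : Sph d => ENNReal.ofReal ((Tblk Z 0 (n^2) (ω, u))^2)) :=
      (Fblk_meas hZm 0 (n^2)).comp measurable_prodMk_left
    have hmeas2 : Measurable (fun u : Sph d => ENNReal.ofReal ((Tblk Z (n^2) m (ω, u))^2)) :=
      (Fblk_meas hZm (n^2) m).comp measurable_prodMk_left
    calc L m ≤ ∫⁻ u, ((2 * ENNReal.ofReal ((n:ℝ)⁻¹^4)) * ENNReal.ofReal ((Tblk Z 0 (n^2) (ω, u))^2)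
          + (2 * ENNReal.ofReal ((n:ℝ)⁻¹^4)) * ENNReal.ofReal ((Tblk Z (n^2) m (ω, u))^2)) ∂σ :=
          lintegral_mono hpt
      _ = (2 * ENNReal.ofReal ((n:ℝ)⁻¹^4)) * gblk σ Z 0 (n^2) ω
          + (2 * ENNReal.ofReal ((n:ℝ)⁻¹^4)) * gblk σ Z (n^2) m ω := by
          rw [lintegral_add_left (hmeas1.const_mul _),
            lintegral_const_mul' _ _ (by exact ENNReal.mul_ne_top (by norm_num) ENNReal.ofReal_ne_top),
            lintegral_const_mul' _ _ (by exact ENNReal.mul_ne_top (by norm_num) ENNReal.ofReal_ne_top)]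
          rfl
      _ = (2 * ENNReal.ofReal ((n:ℝ)⁻¹^4)) * (gblk σ Z 0 (n^2) ω + gblk σ Z (n^2) m ω) := by ring
      _ ≤ (2 * ENNReal.ofReal ((n:ℝ)⁻¹^4)) * Dn n ω := by
          refine mul_le_mul_right ?_ _
          refine add_le_add le_rfl ?_
          exact Finset.single_le_sum (f := fun m' => gblk σ Z (n^2) m' ω)
            (fun m' _ => zero_le) (Finset.mem_Ico.2 ⟨hmn, hm2⟩)
      _ = 2 * En n ω := by rw [hEndef]; ring
  have hsqtend : Tendsto (fun m : ℕ => Nat.sqrt m) atTop atTop :=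
    tendsto_atTop_atTop.2 fun b => ⟨b*b, fun a ha => Nat.le_sqrt.2 ha⟩
  have hup : Tendsto (fun m : ℕ => 2 * En (Nat.sqrt m) ω) atTop (nhds 0) := by
    have h := ENNReal.Tendsto.const_mul (a := 2) (hω.comp hsqtend) (Or.inr (by norm_num))
    simpa using h
  have hLtend : Tendsto L atTop (nhds 0) := by
    refine tendsto_of_tendsto_of_tendsto_of_le_of_le' tendsto_const_nhds hup
      (Filter.Eventually.of_forall fun m => zero_le) ?_
    filter_upwards [eventually_ge_atTop 1] with m hm
    exact hLle m hm
  have hfix : ∀ m : ℕ, l2norm σ (fun u => partialAvg Z m ω u) = Real.sqrt ((L m).toReal) := by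
    intro m
    rw [l2norm, hLdef]
    congr 1
    refine integral_eq_lintegral_of_nonneg_ae (Filter.Eventually.of_forall fun u => sq_nonneg _) ?_
    have hme : Measurable (fun u : Sph d => partialAvg Z m ω u) := by
      have h1 : Measurable (fun u : Sph d => Tblk Z 0 m (ω, u)) :=
        (Tblk_meas hZm 0 m).comp measurable_prodMk_left
      exact (h1.const_mul _)
    exact (hme.pow_const 2).aestronglyMeasurable
  have h1 : Tendsto (fun m => (L m).toReal) atTop (nhds 0) := by
    have h := (ENNReal.tendsto_toReal (a := 0) (by simp)).comp hLtend
    simpa [Function.comp_def] using h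
  have h2 : Tendsto (fun m => Real.sqrt ((L m).toReal)) atTop (nhds 0) := by
    have h := (Real.continuous_sqrt.tendsto 0).comp h1
    simpa [Function.comp_def] using h
  have heq : (fun m : ℕ => l2norm σ (fun u => partialAvg Z m ω u))
      = fun m => Real.sqrt ((L m).toReal) := funext hfix
  rw [heq]
  exact h2

end
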